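/- Let 0 < q < 1, b < 1/q, and z₁, z₂ nonzero complex numbers with z₁z₂ ≠ 0. Then the limit as m, n → ∞ of p_{m,n}(z₁, z₂; b | q) / ((bq;q)_∞ z₁^m z₂^n) equals (1/(z₁z₂); q)_∞, where (a;q)_∞ = ∏_{j=0}^{∞}(1 - a q^j). -/

import Mathlib

open Finset Filter
open Topology

noncomputable def qPoch (a q : ℂ) (n : ℕ) : ℂ :=
  ∏ j ∈ Finset.range n, (1 - a * q ^ j)

noncomputable def qbinom (q : ℂ) : ℕ → ℕ → ℂ
  | _, 0 => 1
  | 0, _ + 1 => 0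
  | m + 1, k + 1 => qbinom q m k + q ^ (k + 1) * qbinom q m (k + 1)

/-- The first q-analogue of the 2D Hermite polynomials. -/
noncomputable def H2D (q z1 z2 : ℂ) (m n : ℕ) : ℂ :=
  ∑ k ∈ Finset.range (min m n + 1),
    qbinom q m k * qbinom q n k * (-1) ^ k * q ^ (k.choose 2) * qPoch q q k *
      z1 ^ (m - k) * z2 ^ (n - k)

/-- The second q-analogue of the 2D Hermite polynomials. -/
noncomputable def h2D (q z1 z2 : ℂ) (m n : ℕ) : ℂ :=
  ∑ j ∈ Finset.range (min m n + 1),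
    qbinom q m j * qbinom q n j * q ^ ((m - j) * (n - j)) * (-1) ^ j * qPoch q q j *
      z1 ^ (m - j) * z2 ^ (n - j)

/-- The q-2D ultraspherical (q-disk / q-Zernike) polynomials. -/
noncomputable def p2D (q b z1 z2 : ℂ) (m n : ℕ) : ℂ :=
  ∑ k ∈ Finset.range (min m n + 1),
    qbinom q m k * qbinom q n k * (-1) ^ k * q ^ (k.choose 2) * qPoch q q k *
      qPoch (b * q) q (m + n - k) * z1 ^ (m - k) * z2 ^ (n - k)

/-- The infinite q-Pochhammer product (a;q)_∞. -/
noncomputable def qPochInf (a q : ℂ) : ℂ :=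
  ∏' j : ℕ, (1 - a * q ^ j)

lemma qPoch_zero (a q : ℂ) : qPoch a q 0 = 1 := by simp [qPoch]

lemma qPoch_succ (a q : ℂ) (n : ℕ) : qPoch a q (n+1) = qPoch a q n * (1 - a * q ^ n) :=
  Finset.prod_range_succ _ n

lemma qbinom_zero (q : ℂ) (m : ℕ) : qbinom q m 0 = 1 := by cases m <;> rfl

lemma qbinom_succ (q : ℂ) (m k : ℕ) :
    qbinom q (m+1) (k+1) = qbinom q m k + q ^ (k + 1) * qbinom q m (k + 1) := rfl

lemma qbinom_eq_zero (q : ℂ) : ∀ {m k : ℕ}, m < k → qbinom q m k = 0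
  | 0, _+1, _ => rfl
  | m+1, k+1, h => by
      rw [qbinom_succ, qbinom_eq_zero (q := q) (by omega),
        qbinom_eq_zero (q := q) (by omega)]
      ring

lemma qbinom_self (q : ℂ) : ∀ m : ℕ, qbinom q m m = 1
  | 0 => rfl
  | m+1 => by
      rw [qbinom_succ, qbinom_self q m, qbinom_eq_zero q (by omega)]
      ring

lemma qbinom_mul_eq (q : ℂ) : ∀ m k : ℕ, k ≤ m →
    qbinom q m k * (qPoch q q k * qPoch q q (m-k)) = qPoch q q m
  | m, 0, _ => by simp [qbinom_zero, qPoch_zero]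
  | 0, k+1, h => by omega
  | m+1, k+1, h => by
      rcases eq_or_lt_of_le (Nat.succ_le_succ_iff.mp h) with rfl | hlt
      · rw [qbinom_self, Nat.sub_self, qPoch_zero]
        ring
      · obtain ⟨d, rfl⟩ : ∃ d, m = k + 1 + d := ⟨m - (k+1), by omega⟩
        have h1 := qbinom_mul_eq q (k+1+d) k (by omega)
        have h2 := qbinom_mul_eq q (k+1+d) (k+1) (by omega)
        have e1 : k + 1 + d - k = d + 1 := by omega
        have e2 : k + 1 + d - (k+1) = d := by omega
        have e3 : k + 1 + d + 1 - (k + 1) = d + 1 := by omega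
        rw [e1] at h1
        rw [e2] at h2
        rw [e3, qbinom_succ, qPoch_succ q q (k+1+d), qPoch_succ q q k, qPoch_succ q q d]
        rw [qPoch_succ q q d] at h1; rw [qPoch_succ q q k] at h2
        linear_combination (1 - q * q^k) * h1 + q^(k+1) * (1 - q * q^d) * h2

lemma euler_fin (q : ℂ) : ∀ (N : ℕ) (x : ℂ),
    ∏ j ∈ Finset.range N, (1 - x * q ^ j) =
      ∑ k ∈ Finset.range (N+1), qbinom q N k * ((-1)^k * q ^ (k.choose 2) * x ^ k)
  | 0, x => by simp [qbinom_zero]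
  | N+1, x => by
      have IH := euler_fin q N (x * q)
      rw [Finset.prod_range_succ']
      simp only [pow_succ']  -- q^(j+1) = q * q^j ?
      have lhs_eq : ∀ j, 1 - x * (q * q ^ j) = 1 - (x*q) * q^j := by intro j; ring
      rw [Finset.sum_range_succ']
      have t0 : qbinom q (N+1) 0 * ((-1)^0 * q ^ (Nat.choose 0 2) * x ^ 0) = 1 := by
        simp [qbinom_zero]
      rw [t0]
      have tsucc : ∀ k, qbinom q (N+1) (k+1) * ((-1)^(k+1) * q ^ ((k+1).choose 2) * x ^ (k+1)) =
          qbinom q N k * ((-1)^k * q ^ (k.choose 2) * (x*q) ^ k) * (-x) +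
          (qbinom q N (k+1) * ((-1)^(k+1) * q ^ ((k+1).choose 2) * (x*q) ^ (k+1))) := by
        intro k
        rw [qbinom_succ]
        have hc : (k+1).choose 2 = k.choose 2 + k := by
          have h := Nat.choose_succ_succ k 1
          simp [Nat.choose_one_right] at h
          omega
        rw [hc]
        ring
      calc (∏ j ∈ Finset.range N, (1 - x * (q * q ^ j))) * (1 - x * q ^ 0)
          = (∑ k ∈ Finset.range (N+1), qbinom q N k * ((-1)^k * q ^ (k.choose 2) * (x*q) ^ k))
              * (1 - x) := by
            rw [← IH]
            congr 1
            · exact Finset.prod_congr rfl fun j _ => by ring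
            · simp
        _ = (∑ k ∈ Finset.range (N+1), qbinom q N k * ((-1)^k * q ^ (k.choose 2) * (x*q) ^ k) * (-x))
              + ((∑ k ∈ Finset.range (N+1), qbinom q N (k+1) * ((-1)^(k+1) * q ^ ((k+1).choose 2) * (x*q) ^ (k+1))) + 1) := by
            have shift : (∑ k ∈ Finset.range (N+1), qbinom q N (k+1) * ((-1)^(k+1) * q ^ ((k+1).choose 2) * (x*q) ^ (k+1))) + 1 =
                ∑ k ∈ Finset.range (N+1), qbinom q N k * ((-1)^k * q ^ (k.choose 2) * (x*q) ^ k) := by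
              have h0 : qbinom q N 0 * ((-1)^0 * q ^ (Nat.choose 0 2) * (x*q) ^ 0) = 1 := by
                simp [qbinom_zero]
              have := Finset.sum_range_succ' (fun k => qbinom q N k * ((-1)^k * q ^ (k.choose 2) * (x*q) ^ k)) (N+1)
              rw [h0] at this
              rw [← this, Finset.sum_range_succ, qbinom_eq_zero q (by omega)]
              ring
            rw [shift, ← Finset.sum_mul]
            ring
        _ = (∑ k ∈ Finset.range (N+1), qbinom q (N+1) (k+1) * ((-1)^(k+1) * q ^ ((k+1).choose 2) * x ^ (k+1))) + 1 := by
            rw [← add_assoc]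
            congr 1
            rw [← Finset.sum_add_distrib]
            exact Finset.sum_congr rfl fun k _ => (tsucc k).symm

section analytic
variable {q : ℝ}

lemma summable_qlog (a : ℂ) (hq0 : 0 < q) (hq1 : q < 1)
    (h : ∀ j : ℕ, (1 : ℂ) - a * (q:ℂ)^j ≠ 0) :
    Summable (fun j : ℕ => Complex.log (1 - a * (q:ℂ)^j)) := by
  apply Summable.of_norm_bounded_eventually_nat
    (((summable_geometric_of_lt_one hq0.le hq1).mul_left ‖a‖).mul_left (3/2))
  have h0 : Tendsto (fun j : ℕ => ‖a‖ * q ^ j) atTop (𝓝 0) := by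
    simpa using (tendsto_pow_atTop_nhds_zero_of_lt_one (le_of_lt hq0) hq1).const_mul ‖a‖
  filter_upwards [h0.eventually (eventually_le_nhds (by norm_num : (0:ℝ) < 1/2))] with j hj
  have hnorm : ‖a * (q:ℂ)^j‖ = ‖a‖ * q ^ j := by
    rw [norm_mul, norm_pow, Complex.norm_real, Real.norm_eq_abs, abs_of_pos hq0]
  have hz : ‖-(a * (q:ℂ)^j)‖ ≤ 1/2 := by rwa [norm_neg, hnorm]
  have := Complex.norm_log_one_add_half_le_self hz
  rw [norm_neg, hnorm] at this
  calc ‖Complex.log (1 - a * (q:ℂ)^j)‖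
      = ‖Complex.log (1 + -(a * (q:ℂ)^j))‖ := by rw [sub_eq_add_neg]
    _ ≤ 3/2 * (‖a‖ * q ^ j) := this

lemma multipliable_q (a : ℂ) (hq0 : 0 < q) (hq1 : q < 1) :
    Multipliable (fun j : ℕ => 1 - a * (q:ℂ)^j) := by
  by_cases h : ∀ j : ℕ, (1:ℂ) - a * (q:ℂ)^j ≠ 0
  · exact Complex.multipliable_of_summable_log (summable_qlog a hq0 hq1 h)
  · push_neg at h
    obtain ⟨j0, hj0⟩ := h
    refine ⟨0, ?_⟩
    rw [HasProd]
    refine tendsto_const_nhds.congr' ?_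
    filter_upwards [eventually_ge_atTop ({j0} : Finset ℕ)] with s hs
    exact (Finset.prod_eq_zero (hs (Finset.mem_singleton_self j0)) hj0).symm

lemma tendsto_qPoch (a : ℂ) (hq0 : 0 < q) (hq1 : q < 1) :
    Tendsto (fun n => qPoch a (q:ℂ) n) atTop (𝓝 (qPochInf a (q:ℂ))) :=
  (multipliable_q a hq0 hq1).hasProd.tendsto_prod_nat

lemma qPochInf_ne_zero (a : ℂ) (hq0 : 0 < q) (hq1 : q < 1)
    (h : ∀ j : ℕ, (1:ℂ) - a * (q:ℂ)^j ≠ 0) : qPochInf a (q:ℂ) ≠ 0 := by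
  have h2 := Complex.cexp_tsum_eq_tprod (f := fun j => 1 - a * (q:ℂ)^j) h
      (summable_qlog a hq0 hq1 h)
  rw [qPochInf, ← h2]
  exact Complex.exp_ne_zero _

lemma qPoch_norm_le (a : ℂ) (hq0 : 0 < q) (hq1 : q < 1) (n : ℕ) :
    ‖qPoch a (q:ℂ) n‖ ≤ Real.exp (‖a‖ * (1-q)⁻¹) := by
  rw [qPoch, norm_prod]
  calc ∏ j ∈ Finset.range n, ‖1 - a * (q:ℂ)^j‖
      ≤ ∏ j ∈ Finset.range n, Real.exp (‖a‖ * q^j) := by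
        apply Finset.prod_le_prod (fun j _ => norm_nonneg _)
        intro j _
        calc ‖1 - a * (q:ℂ)^j‖ ≤ ‖(1:ℂ)‖ + ‖a * (q:ℂ)^j‖ := norm_sub_le _ _
          _ = ‖a‖ * q ^ j + 1 := by
              rw [norm_mul, norm_pow, Complex.norm_real, Real.norm_eq_abs, abs_of_pos hq0, norm_one]; ring
          _ ≤ Real.exp (‖a‖ * q^j) := Real.add_one_le_exp _
    _ = Real.exp (∑ j ∈ Finset.range n, ‖a‖ * q^j) := (Real.exp_sum _ _).symm
    _ ≤ Real.exp (‖a‖ * (1-q)⁻¹) := by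
        apply Real.exp_le_exp.mpr
        rw [← Finset.mul_sum]
        apply mul_le_mul_of_nonneg_left _ (norm_nonneg a)
        rw [← tsum_geometric_of_lt_one hq0.le hq1]
        exact Summable.sum_le_tsum (Finset.range n) (fun i _ => by positivity)
          (summable_geometric_of_lt_one hq0.le hq1)

lemma norm_qPoch_q (hq0 : 0 < q) (hq1 : q < 1) (n : ℕ) :
    ‖qPoch (q:ℂ) (q:ℂ) n‖ = ∏ j ∈ Finset.range n, (1 - q * q^j) := by
  rw [qPoch, norm_prod]
  refine Finset.prod_congr rfl fun j _ => ?_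
  have hpos : (0:ℝ) < 1 - q * q^j := by
    have : q * q^j < 1 := by
      calc q * q^j ≤ q * 1 := by
            apply mul_le_mul_of_nonneg_left _ hq0.le
            exact pow_le_one₀ hq0.le hq1.le
        _ < 1 := by linarith
    linarith
  have : (1:ℂ) - (q:ℂ) * (q:ℂ)^j = ((1 - q * q^j : ℝ) : ℂ) := by push_cast; ring
  rw [this, Complex.norm_real, Real.norm_eq_abs, abs_of_pos hpos]

lemma norm_qPoch_q_antitone (hq0 : 0 < q) (hq1 : q < 1) {k n : ℕ} (hkn : k ≤ n) :
    ‖qPoch (q:ℂ) (q:ℂ) n‖ ≤ ‖qPoch (q:ℂ) (q:ℂ) k‖ := by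
  obtain ⟨d, rfl⟩ : ∃ d, n = k + d := ⟨n - k, by omega⟩
  rw [norm_qPoch_q hq0 hq1, norm_qPoch_q hq0 hq1, Finset.prod_range_add]
  have hfac : ∀ j : ℕ, 0 < 1 - q * q ^ j := by
    intro j
    have : q * q^j ≤ q * 1 := mul_le_mul_of_nonneg_left (pow_le_one₀ hq0.le hq1.le) hq0.le
    nlinarith
  calc (∏ j ∈ Finset.range k, (1 - q * q^j)) * ∏ j ∈ Finset.range d, (1 - q * q^(k+j))
      ≤ (∏ j ∈ Finset.range k, (1 - q * q^j)) * 1 := by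
        apply mul_le_mul_of_nonneg_left _ (Finset.prod_nonneg fun j _ => (hfac j).le)
        apply Finset.prod_le_one (fun j _ => (hfac _).le)
        intro j _
        have : 0 < q * q ^ (k+j) := by positivity
        linarith
    _ = _ := mul_one _

lemma qq_ne (hq0 : 0 < q) (hq1 : q < 1) : ∀ j : ℕ, (1:ℂ) - (q:ℂ) * (q:ℂ)^j ≠ 0 := by
  intro j
  have hpos : (0:ℝ) < 1 - q * q^j := by
    have : q * q^j ≤ q * 1 := mul_le_mul_of_nonneg_left (pow_le_one₀ hq0.le hq1.le) hq0.le
    nlinarith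
  have : (1:ℂ) - (q:ℂ) * (q:ℂ)^j = ((1 - q * q^j : ℝ) : ℂ) := by push_cast; ring
  rw [this]
  exact_mod_cast hpos.ne'

lemma cq_pos (hq0 : 0 < q) (hq1 : q < 1) : 0 < ‖qPochInf (q:ℂ) (q:ℂ)‖ :=
  norm_pos_iff.mpr (qPochInf_ne_zero (q:ℂ) hq0 hq1 (qq_ne hq0 hq1))

lemma cq_le (hq0 : 0 < q) (hq1 : q < 1) (k : ℕ) :
    ‖qPochInf (q:ℂ) (q:ℂ)‖ ≤ ‖qPoch (q:ℂ) (q:ℂ) k‖ := by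
  apply le_of_tendsto ((tendsto_qPoch (q:ℂ) hq0 hq1).norm)
  filter_upwards [eventually_ge_atTop k] with n hn
  exact norm_qPoch_q_antitone hq0 hq1 hn

lemma qPoch_q_ne_zero (hq0 : 0 < q) (hq1 : q < 1) (k : ℕ) : qPoch (q:ℂ) (q:ℂ) k ≠ 0 :=
  Finset.prod_ne_zero_iff.mpr fun j _ => qq_ne hq0 hq1 j

lemma qbinom_norm_le (hq0 : 0 < q) (hq1 : q < 1) (m k : ℕ) :
    ‖qbinom (q:ℂ) m k‖ ≤ ‖qPochInf (q:ℂ) (q:ℂ)‖⁻¹ := by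
  by_cases hkm : k ≤ m
  · have hmul := qbinom_mul_eq (q:ℂ) m k hkm
    have h1 : ‖qbinom (q:ℂ) m k‖ * (‖qPoch (q:ℂ) (q:ℂ) k‖ * ‖qPoch (q:ℂ) (q:ℂ) (m-k)‖)
        = ‖qPoch (q:ℂ) (q:ℂ) m‖ := by
      rw [← norm_mul, ← norm_mul, hmul]
    have hk0 : 0 < ‖qPoch (q:ℂ) (q:ℂ) k‖ := norm_pos_iff.mpr (qPoch_q_ne_zero hq0 hq1 k)
    have hmk0 : 0 < ‖qPoch (q:ℂ) (q:ℂ) (m-k)‖ := norm_pos_iff.mpr (qPoch_q_ne_zero hq0 hq1 _)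
    have hc := cq_pos hq0 hq1
    have hck := cq_le hq0 hq1 k
    have hmon : ‖qPoch (q:ℂ) (q:ℂ) m‖ ≤ ‖qPoch (q:ℂ) (q:ℂ) (m-k)‖ :=
      norm_qPoch_q_antitone hq0 hq1 (by omega)
    have hB : (0:ℝ) ≤ ‖qbinom (q:ℂ) m k‖ := norm_nonneg _
    have h2 : ‖qbinom (q:ℂ) m k‖ * ‖qPoch (q:ℂ) (q:ℂ) k‖ ≤ 1 := by
      rw [← mul_le_mul_iff_of_pos_right hmk0, one_mul]
      calc ‖qbinom (q:ℂ) m k‖ * ‖qPoch (q:ℂ) (q:ℂ) k‖ * ‖qPoch (q:ℂ) (q:ℂ) (m-k)‖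
          = ‖qbinom (q:ℂ) m k‖ * (‖qPoch (q:ℂ) (q:ℂ) k‖ * ‖qPoch (q:ℂ) (q:ℂ) (m-k)‖) := by ring
        _ = ‖qPoch (q:ℂ) (q:ℂ) m‖ := h1
        _ ≤ ‖qPoch (q:ℂ) (q:ℂ) (m-k)‖ := hmon
    have h3 : ‖qbinom (q:ℂ) m k‖ * ‖qPochInf (q:ℂ) (q:ℂ)‖ ≤ 1 :=
      le_trans (mul_le_mul_of_nonneg_left hck hB) h2
    rw [← mul_le_mul_iff_of_pos_right hc, inv_mul_cancel₀ (ne_of_gt hc)]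
    exact h3
  · rw [qbinom_eq_zero (q:ℂ) (by omega)]
    rw [norm_zero]
    exact inv_nonneg.mpr (norm_nonneg _)

end analytic

section analytic2
variable {q : ℝ}

lemma tendsto_qbinom (hq0 : 0 < q) (hq1 : q < 1) (k : ℕ) :
    Tendsto (fun m : ℕ => qbinom (q:ℂ) m k) atTop (𝓝 (qPoch (q:ℂ) (q:ℂ) k)⁻¹) := by
  have hL := tendsto_qPoch (q:ℂ) hq0 hq1
  have hL0 : qPochInf (q:ℂ) (q:ℂ) ≠ 0 := qPochInf_ne_zero _ hq0 hq1 (qq_ne hq0 hq1)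
  have hk0 : qPoch (q:ℂ) (q:ℂ) k ≠ 0 := qPoch_q_ne_zero hq0 hq1 k
  have h1 : Tendsto (fun m : ℕ => qPoch (q:ℂ) (q:ℂ) m *
      (qPoch (q:ℂ) (q:ℂ) k * qPoch (q:ℂ) (q:ℂ) (m - k))⁻¹) atTop
      (𝓝 (qPochInf (q:ℂ) (q:ℂ) * (qPoch (q:ℂ) (q:ℂ) k * qPochInf (q:ℂ) (q:ℂ))⁻¹)) := by
    apply Tendsto.mul hL
    apply Tendsto.inv₀ (Tendsto.mul tendsto_const_nhds (hL.comp (tendsto_sub_atTop_nat k)))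
    exact mul_ne_zero hk0 hL0
  have heq : qPochInf (q:ℂ) (q:ℂ) * (qPoch (q:ℂ) (q:ℂ) k * qPochInf (q:ℂ) (q:ℂ))⁻¹
      = (qPoch (q:ℂ) (q:ℂ) k)⁻¹ := by
    field_simp
  rw [heq] at h1
  apply h1.congr'
  filter_upwards [eventually_ge_atTop k] with m hm
  have hmm := qbinom_mul_eq (q:ℂ) m k hm
  rw [← hmm, mul_inv_cancel_right₀ (mul_ne_zero hk0 (qPoch_q_ne_zero hq0 hq1 _))]

lemma summable_qpow (hq0 : 0 < q) (hq1 : q < 1) {r : ℝ} (hr : 0 ≤ r) (A : ℝ) :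
    Summable (fun k : ℕ => A * (q ^ (k.choose 2) * r ^ k)) := by
  apply Summable.mul_left
  apply summable_of_ratio_norm_eventually_le (r := 1/2) (by norm_num)
  have h0 : Tendsto (fun k : ℕ => q^k * r) atTop (𝓝 0) := by
    simpa using ((tendsto_pow_atTop_nhds_zero_of_lt_one hq0.le hq1).mul_const r)
  filter_upwards [h0.eventually (eventually_le_nhds (by norm_num : (0:ℝ) < 1/2))] with k hk
  have hc : (k+1).choose 2 = k.choose 2 + k := by
    have h := Nat.choose_succ_succ k 1
    simp [Nat.choose_one_right] at h
    omega
  have hq : (0:ℝ) ≤ q := hq0.le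
  rw [Real.norm_eq_abs, Real.norm_eq_abs, abs_of_nonneg (by positivity),
    abs_of_nonneg (by positivity), hc, pow_add, pow_succ]
  have h1 : q ^ k.choose 2 * q ^ k * (r ^ k * r) = (q^k * r) * (q ^ k.choose 2 * r ^ k) := by ring
  rw [h1]
  apply mul_le_mul_of_nonneg_right hk (by positivity)

lemma euler_inf (hq0 : 0 < q) (hq1 : q < 1) (x : ℂ) :
    ∑' k : ℕ, ((-1)^k * (q:ℂ) ^ (k.choose 2) * (qPoch (q:ℂ) (q:ℂ) k)⁻¹ * x ^ k)
      = qPochInf x (q:ℂ) := by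
  set f : ℕ → ℕ → ℂ := fun N k => qbinom (q:ℂ) N k * ((-1)^k * (q:ℂ) ^ (k.choose 2) * x ^ k)
    with hf
  have key : Tendsto (fun N => ∑' k, f N k) atTop
      (𝓝 (∑' k, ((-1)^k * (q:ℂ) ^ (k.choose 2) * (qPoch (q:ℂ) (q:ℂ) k)⁻¹ * x ^ k))) := by
    apply tendsto_tsum_of_dominated_convergence
      (bound := fun k => ‖qPochInf (q:ℂ) (q:ℂ)‖⁻¹ * (q ^ (k.choose 2) * ‖x‖ ^ k))
    · exact summable_qpow hq0 hq1 (norm_nonneg x) _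
    · intro k
      have h := (tendsto_qbinom hq0 hq1 k).mul_const ((-1)^k * (q:ℂ) ^ (k.choose 2) * x ^ k)
      have he : (-1)^k * (q:ℂ) ^ (k.choose 2) * (qPoch (q:ℂ) (q:ℂ) k)⁻¹ * x ^ k
          = (qPoch (q:ℂ) (q:ℂ) k)⁻¹ * ((-1)^k * (q:ℂ) ^ (k.choose 2) * x ^ k) := by ring
      rw [he]
      exact h
    · apply Filter.Eventually.of_forall
      intro N k
      have hnorm : ‖f N k‖ = ‖qbinom (q:ℂ) N k‖ * (q ^ (k.choose 2) * ‖x‖^k) := by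
        rw [hf]
        simp [norm_mul, norm_pow, Complex.norm_real, Real.norm_eq_abs, abs_of_pos hq0]
      rw [hnorm]
      exact mul_le_mul_of_nonneg_right (qbinom_norm_le hq0 hq1 N k) (by positivity)
  have heq2 : ∀ N, ∑' k, f N k = qPoch x (q:ℂ) N := by
    intro N
    rw [tsum_eq_sum (s := Finset.range (N+1)) (fun k hk => ?_)]
    · rw [qPoch]
      exact (euler_fin (q:ℂ) N x).symm
    · rw [hf]
      simp only
      rw [qbinom_eq_zero (q:ℂ) (by simpa using hk), zero_mul]
  exact tendsto_nhds_unique (Filter.Tendsto.congr heq2 key) (tendsto_qPoch x hq0 hq1)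

end analytic2


set_option maxHeartbeats 1000000 in
theorem stmt17 (q b : ℝ) (hq0 : 0 < q) (hq1 : q < 1) (hb : b < 1 / q)
    (z1 z2 : ℂ) (hz1 : z1 ≠ 0) (hz2 : z2 ≠ 0) :
    Tendsto
      (fun p : ℕ × ℕ =>
        p2D (q : ℂ) (b : ℂ) z1 z2 p.1 p.2 /
          (qPochInf ((b : ℂ) * (q : ℂ)) (q : ℂ) * z1 ^ p.1 * z2 ^ p.2))
      atTop (nhds (qPochInf (1 / (z1 * z2)) (q : ℂ))) := by
  have hbq1 : b * q < 1 := by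
    rw [lt_div_iff₀ hq0] at hb
    exact hb
  have hr : ∀ j : ℕ, 0 < 1 - b * q * q ^ j := by
    intro j
    rcases le_or_gt (b * q) 0 with h | h
    · have := mul_nonpos_of_nonpos_of_nonneg h (pow_nonneg hq0.le j)
      linarith
    · have h1 : b * q * q ^ j ≤ b * q * 1 :=
        mul_le_mul_of_nonneg_left (pow_le_one₀ hq0.le hq1.le) h.le
      linarith
  have hbqne : ∀ j : ℕ, (1:ℂ) - ((b:ℂ) * (q:ℂ)) * (q:ℂ) ^ j ≠ 0 := by
    intro j
    have hcast : (1:ℂ) - ((b:ℂ) * (q:ℂ)) * (q:ℂ) ^ j = ((1 - b * q * q ^ j : ℝ) : ℂ) := by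
      push_cast; ring
    rw [hcast]
    exact_mod_cast (hr j).ne'
  have hP0 : qPochInf ((b:ℂ) * (q:ℂ)) (q:ℂ) ≠ 0 :=
    qPochInf_ne_zero _ hq0 hq1 hbqne
  set F : ℕ × ℕ → ℕ → ℂ := fun p k =>
    qbinom (q:ℂ) p.1 k * qbinom (q:ℂ) p.2 k *
      ((-1)^k * (q:ℂ) ^ (k.choose 2) * qPoch (q:ℂ) (q:ℂ) k) *
      (qPoch ((b:ℂ) * (q:ℂ)) (q:ℂ) (p.1 + p.2 - k) / qPochInf ((b:ℂ) * (q:ℂ)) (q:ℂ)) *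
      (z1 ^ (p.1 - k) / z1 ^ p.1) * (z2 ^ (p.2 - k) / z2 ^ p.2) with hF
  set G : ℕ → ℂ := fun k =>
    (-1)^k * (q:ℂ) ^ (k.choose 2) * (qPoch (q:ℂ) (q:ℂ) k)⁻¹ * (1 / (z1 * z2)) ^ k with hG
  have hfst : Tendsto (Prod.fst : ℕ × ℕ → ℕ) atTop atTop := by
    rw [← prod_atTop_atTop_eq]; exact tendsto_fst
  have hsnd : Tendsto (Prod.snd : ℕ × ℕ → ℕ) atTop atTop := by
    rw [← prod_atTop_atTop_eq]; exact tendsto_snd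
  -- pointwise limits
  have hab : ∀ k : ℕ, Tendsto (fun p : ℕ × ℕ => F p k) atTop (𝓝 (G k)) := by
    intro k
    have h1 : Tendsto (fun p : ℕ × ℕ => qbinom (q:ℂ) p.1 k) atTop
        (𝓝 (qPoch (q:ℂ) (q:ℂ) k)⁻¹) := (tendsto_qbinom hq0 hq1 k).comp hfst
    have h2 : Tendsto (fun p : ℕ × ℕ => qbinom (q:ℂ) p.2 k) atTop
        (𝓝 (qPoch (q:ℂ) (q:ℂ) k)⁻¹) := (tendsto_qbinom hq0 hq1 k).comp hsnd
    have hsum : Tendsto (fun p : ℕ × ℕ => p.1 + p.2 - k) atTop atTop :=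
      (tendsto_sub_atTop_nat k).comp (Tendsto.atTop_add_atTop hfst hsnd)
    have h3 : Tendsto (fun p : ℕ × ℕ =>
        qPoch ((b:ℂ) * (q:ℂ)) (q:ℂ) (p.1 + p.2 - k) / qPochInf ((b:ℂ) * (q:ℂ)) (q:ℂ)) atTop
        (𝓝 (qPochInf ((b:ℂ) * (q:ℂ)) (q:ℂ) / qPochInf ((b:ℂ) * (q:ℂ)) (q:ℂ))) :=
      Tendsto.div_const ((tendsto_qPoch ((b:ℂ) * (q:ℂ)) hq0 hq1).comp hsum) _
    have hw1 : (fun p : ℕ × ℕ => z1 ^ (p.1 - k) / z1 ^ p.1) =ᶠ[atTop]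
        (fun _ => (z1 ^ k)⁻¹) := by
      filter_upwards [eventually_ge_atTop ((k, k) : ℕ × ℕ)] with p hp
      rw [pow_sub₀ z1 hz1 hp.1, mul_comm, mul_div_assoc, div_self (pow_ne_zero _ hz1), mul_one]
    have hw2 : (fun p : ℕ × ℕ => z2 ^ (p.2 - k) / z2 ^ p.2) =ᶠ[atTop]
        (fun _ => (z2 ^ k)⁻¹) := by
      filter_upwards [eventually_ge_atTop ((k, k) : ℕ × ℕ)] with p hp
      rw [pow_sub₀ z2 hz2 hp.2, mul_comm, mul_div_assoc, div_self (pow_ne_zero _ hz2), mul_one]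
    have hT : Tendsto (fun p : ℕ × ℕ =>
        qbinom (q:ℂ) p.1 k * qbinom (q:ℂ) p.2 k *
          ((-1)^k * (q:ℂ) ^ (k.choose 2) * qPoch (q:ℂ) (q:ℂ) k) *
          (qPoch ((b:ℂ) * (q:ℂ)) (q:ℂ) (p.1 + p.2 - k) / qPochInf ((b:ℂ) * (q:ℂ)) (q:ℂ)) *
          (z1 ^ k)⁻¹ * (z2 ^ k)⁻¹) atTop
        (𝓝 ((qPoch (q:ℂ) (q:ℂ) k)⁻¹ * (qPoch (q:ℂ) (q:ℂ) k)⁻¹ *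
          ((-1)^k * (q:ℂ) ^ (k.choose 2) * qPoch (q:ℂ) (q:ℂ) k) *
          (qPochInf ((b:ℂ) * (q:ℂ)) (q:ℂ) / qPochInf ((b:ℂ) * (q:ℂ)) (q:ℂ)) *
          (z1 ^ k)⁻¹ * (z2 ^ k)⁻¹)) :=
      ((((h1.mul h2).mul tendsto_const_nhds).mul h3).mul tendsto_const_nhds).mul
        tendsto_const_nhds
    have hval : (qPoch (q:ℂ) (q:ℂ) k)⁻¹ * (qPoch (q:ℂ) (q:ℂ) k)⁻¹ *
        ((-1)^k * (q:ℂ) ^ (k.choose 2) * qPoch (q:ℂ) (q:ℂ) k) *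
        (qPochInf ((b:ℂ) * (q:ℂ)) (q:ℂ) / qPochInf ((b:ℂ) * (q:ℂ)) (q:ℂ)) *
        (z1 ^ k)⁻¹ * (z2 ^ k)⁻¹ = G k := by
      rw [hG, div_self hP0]
      have hPk : qPoch (q:ℂ) (q:ℂ) k ≠ 0 := qPoch_q_ne_zero hq0 hq1 k
      field_simp
      rw [one_div, inv_pow, mul_pow]
      field_simp
    rw [hval] at hT
    apply hT.congr'
    filter_upwards [hw1, hw2] with p e1 e2
    rw [hF]
    simp only
    rw [e1, e2]
  -- bound
  have hPk1 : ∀ k : ℕ, ‖qPoch (q:ℂ) (q:ℂ) k‖ ≤ 1 := by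
    intro k
    rw [norm_qPoch_q hq0 hq1]
    apply Finset.prod_le_one
    · intro j _
      have h1 : q * q ^ j ≤ q * 1 := mul_le_mul_of_nonneg_left (pow_le_one₀ hq0.le hq1.le) hq0.le
      nlinarith
    · intro j _
      have : 0 < q * q ^ j := by positivity
      linarith
  have h_bound : ∀ (p : ℕ × ℕ) (k : ℕ), ‖F p k‖ ≤
      (‖qPochInf (q:ℂ) (q:ℂ)‖⁻¹ * ‖qPochInf (q:ℂ) (q:ℂ)‖⁻¹ *
        (Real.exp (‖(b:ℂ) * (q:ℂ)‖ * (1-q)⁻¹) * ‖qPochInf ((b:ℂ) * (q:ℂ)) (q:ℂ)‖⁻¹)) *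
      (q ^ (k.choose 2) * (‖z1‖⁻¹ * ‖z2‖⁻¹) ^ k) := by
    intro p k
    by_cases hk : k ≤ min p.1 p.2
    · have hkm : k ≤ p.1 := le_trans hk (min_le_left _ _)
      have hkn : k ≤ p.2 := le_trans hk (min_le_right _ _)
      have e1 : z1 ^ (p.1 - k) / z1 ^ p.1 = (z1 ^ k)⁻¹ := by
        rw [pow_sub₀ z1 hz1 hkm, mul_comm, mul_div_assoc, div_self (pow_ne_zero _ hz1), mul_one]
      have e2 : z2 ^ (p.2 - k) / z2 ^ p.2 = (z2 ^ k)⁻¹ := by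
        rw [pow_sub₀ z2 hz2 hkn, mul_comm, mul_div_assoc, div_self (pow_ne_zero _ hz2), mul_one]
      have hnorm : ‖F p k‖ = ‖qbinom (q:ℂ) p.1 k‖ * ‖qbinom (q:ℂ) p.2 k‖ *
          (q ^ (k.choose 2) * ‖qPoch (q:ℂ) (q:ℂ) k‖) *
          (‖qPoch ((b:ℂ) * (q:ℂ)) (q:ℂ) (p.1 + p.2 - k)‖ *
            ‖qPochInf ((b:ℂ) * (q:ℂ)) (q:ℂ)‖⁻¹) * (‖z1‖ ^ k)⁻¹ * (‖z2‖ ^ k)⁻¹ := by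
        rw [hF]
        simp only
        rw [e1, e2]
        simp only [norm_mul, norm_div, norm_inv, norm_pow, norm_neg, norm_one, one_pow,
          Complex.norm_real, Real.norm_eq_abs, abs_of_pos hq0, div_eq_mul_inv]
        ring
      rw [hnorm]
      have step : ‖qbinom (q:ℂ) p.1 k‖ * ‖qbinom (q:ℂ) p.2 k‖ *
          (q ^ (k.choose 2) * ‖qPoch (q:ℂ) (q:ℂ) k‖) *
          (‖qPoch ((b:ℂ) * (q:ℂ)) (q:ℂ) (p.1 + p.2 - k)‖ *
            ‖qPochInf ((b:ℂ) * (q:ℂ)) (q:ℂ)‖⁻¹) * (‖z1‖ ^ k)⁻¹ * (‖z2‖ ^ k)⁻¹ ≤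
          ‖qPochInf (q:ℂ) (q:ℂ)‖⁻¹ * ‖qPochInf (q:ℂ) (q:ℂ)‖⁻¹ *
          (q ^ (k.choose 2) * 1) *
          (Real.exp (‖(b:ℂ) * (q:ℂ)‖ * (1-q)⁻¹) * ‖qPochInf ((b:ℂ) * (q:ℂ)) (q:ℂ)‖⁻¹) *
          (‖z1‖ ^ k)⁻¹ * (‖z2‖ ^ k)⁻¹ := by
        have hb1 : ‖qbinom (q:ℂ) p.1 k‖ * ‖qbinom (q:ℂ) p.2 k‖ ≤
            ‖qPochInf (q:ℂ) (q:ℂ)‖⁻¹ * ‖qPochInf (q:ℂ) (q:ℂ)‖⁻¹ :=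
          mul_le_mul (qbinom_norm_le hq0 hq1 _ _) (qbinom_norm_le hq0 hq1 _ _)
            (norm_nonneg _) (inv_nonneg.mpr (norm_nonneg _))
        have hb2 : q ^ (k.choose 2) * ‖qPoch (q:ℂ) (q:ℂ) k‖ ≤ q ^ (k.choose 2) * 1 :=
          mul_le_mul_of_nonneg_left (hPk1 k) (by positivity)
        have hb3 : ‖qPoch ((b:ℂ) * (q:ℂ)) (q:ℂ) (p.1 + p.2 - k)‖ *
            ‖qPochInf ((b:ℂ) * (q:ℂ)) (q:ℂ)‖⁻¹ ≤
            Real.exp (‖(b:ℂ) * (q:ℂ)‖ * (1-q)⁻¹) * ‖qPochInf ((b:ℂ) * (q:ℂ)) (q:ℂ)‖⁻¹ :=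
          mul_le_mul_of_nonneg_right (qPoch_norm_le _ hq0 hq1 _)
            (inv_nonneg.mpr (norm_nonneg _))
        have hb12 := mul_le_mul hb1 hb2 (by positivity) (by positivity)
        have hb123 := mul_le_mul hb12 hb3 (by positivity) (by positivity)
        have h5 := mul_le_mul_of_nonneg_right hb123
          (inv_nonneg.mpr (pow_nonneg (norm_nonneg z1) k))
        exact mul_le_mul_of_nonneg_right h5
          (inv_nonneg.mpr (pow_nonneg (norm_nonneg z2) k))
      apply le_trans step
      apply le_of_eq
      rw [mul_pow, inv_pow, inv_pow]
      ring
    · have hFz : F p k = 0 := by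
        rw [hF]
        simp only
        rcases Nat.lt_or_ge p.1 k with h | h
        · rw [qbinom_eq_zero (q:ℂ) h]; ring
        · rw [qbinom_eq_zero (q:ℂ) (by omega : p.2 < k)]; ring
      rw [hFz, norm_zero]
      positivity
  -- Tannery
  have key : Tendsto (fun p : ℕ × ℕ => ∑' k, F p k) atTop (𝓝 (∑' k, G k)) :=
    tendsto_tsum_of_dominated_convergence
      (summable_qpow hq0 hq1 (by positivity) _) hab
      (Filter.Eventually.of_forall h_bound)
  have hgoal : ∀ p : ℕ × ℕ, ∑' k, F p k =
      p2D (q:ℂ) (b:ℂ) z1 z2 p.1 p.2 /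
        (qPochInf ((b:ℂ) * (q:ℂ)) (q:ℂ) * z1 ^ p.1 * z2 ^ p.2) := by
    intro p
    rw [tsum_eq_sum (s := Finset.range (min p.1 p.2 + 1)) (fun k hk => ?_)]
    · rw [p2D, Finset.sum_div]
      apply Finset.sum_congr rfl
      intro k _
      rw [hF]
      simp only
      simp only [div_eq_mul_inv, mul_inv]
      ring
    · rw [hF]
      simp only
      have hk' : p.1 ⊓ p.2 + 1 ≤ k := by rw [Finset.mem_range, not_lt] at hk; exact hk
      rcases Nat.lt_or_ge p.1 k with h | h
      · rw [qbinom_eq_zero (q:ℂ) h]; ring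
      · rw [qbinom_eq_zero (q:ℂ) (by omega : p.2 < k)]; ring
  have heuler : ∑' k, G k = qPochInf (1 / (z1 * z2)) (q:ℂ) := by
    rw [hG]
    exact euler_inf hq0 hq1 (1 / (z1 * z2))
  rw [← heuler]
  exact Filter.Tendsto.congr hgoal key
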